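/- Let R := Polynomial ℝ (variable denoted z) and A := MvPolynomial (Fin 2) R with x := X 0, y := X 1, and z := C Polynomial.X ∈ A. Let S := {g : Fin 3 → A | g 0 − g 1 ∈ Ideal.span {x}, g 1 − g 2 ∈ Ideal.span {y}, g 0 − g 2 ∈ Ideal.span {x + y − z}}, an A-submodule of Fin 3 → A. Then the quotient (Fin 3 → A) ⧸ S is flat as an R-module. -/

import Mathlib

/-- The base ring `R = ℝ[z]`. -/
abbrev RR : Type := Polynomial ℝ

/-- The algebra `A = ℝ[z][x,y] = MvPolynomial (Fin 2) ℝ[z]`. -/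
abbrev AA : Type := MvPolynomial (Fin 2) RR

/-- `x ∈ A`. -/
noncomputable def xA : AA := MvPolynomial.X 0
/-- `y ∈ A`. -/
noncomputable def yA : AA := MvPolynomial.X 1
/-- `z ∈ A` (the image of the coefficient variable). -/
noncomputable def zA : AA := MvPolynomial.C Polynomial.X

/-- The quasi-spline module
`S = {(g₁,g₂,g₃) | g₁−g₂ ∈ (x), g₂−g₃ ∈ (y), g₁−g₃ ∈ (x+y−z)} ⊆ A³`. -/
noncomputable def SA : Submodule AA (Fin 3 → AA) :=
  Submodule.comap
      ((LinearMap.proj 0 : (Fin 3 → AA) →ₗ[AA] AA) - (LinearMap.proj 1 : (Fin 3 → AA) →ₗ[AA] AA))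
      (Ideal.span {xA}) ⊓
    Submodule.comap
      ((LinearMap.proj 1 : (Fin 3 → AA) →ₗ[AA] AA) - (LinearMap.proj 2 : (Fin 3 → AA) →ₗ[AA] AA))
      (Ideal.span {yA}) ⊓
    Submodule.comap
      ((LinearMap.proj 0 : (Fin 3 → AA) →ₗ[AA] AA) - (LinearMap.proj 2 : (Fin 3 → AA) →ₗ[AA] AA))
      (Ideal.span {xA + yA - zA})


open TensorProduct LinearMap

/-- Over a PID, a torsion-free module is flat. -/
theorem flat_of_torsionfree {R M : Type} [CommRing R] [IsDomain R] [IsPrincipalIdealRing R]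
    [AddCommGroup M] [Module R M]
    (h : ∀ (r : R) (m : M), r ≠ 0 → r • m = 0 → m = 0) :
    Module.Flat R M := by
  rw [Module.Flat.iff_rTensor_injective']
  intro I
  obtain ⟨p, hp⟩ := (IsPrincipalIdealRing.principal I)
  rcases eq_or_ne p 0 with rfl | hp0
  · have hI : I = ⊥ := by rw [hp]; exact Submodule.span_zero_singleton R
    subst hI
    have hid : (LinearMap.id : (⊥ : Ideal R) →ₗ[R] _) = 0 := Subsingleton.elim _ _
    intro a b _
    calc a = LinearMap.rTensor M LinearMap.id a := by rw [rTensor_id]; rfl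
    _ = 0 := by rw [hid, rTensor_zero]; rfl
    _ = LinearMap.rTensor M LinearMap.id b := by rw [hid, rTensor_zero]; rfl
    _ = b := by rw [rTensor_id]; rfl
  · have hp' : I = Submodule.span R {p} := hp
    subst hp'
    set e := LinearEquiv.toSpanNonzeroSingleton R R p hp0
    set c : R →ₗ[R] R := (Submodule.span R {p}).subtype ∘ₗ e.toLinearMap with hc
    have key : ∀ x : R ⊗[R] M,
        (TensorProduct.lid R M) (LinearMap.rTensor M c x) = p • (TensorProduct.lid R M) x := by
      intro x
      induction x using TensorProduct.induction_on with
      | zero => simp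
      | tmul r m =>
        simp only [rTensor_tmul, TensorProduct.lid_tmul, LinearMap.coe_comp, Function.comp_apply,
          LinearEquiv.coe_coe, Submodule.subtype_apply, c, e,
          LinearEquiv.toSpanNonzeroSingleton_apply, Submodule.coe_smul, smul_eq_mul, smul_smul]
        ring_nf
      | add u v hu hv => simp [hu, hv]
    have hcinj : Function.Injective (LinearMap.rTensor M c) := by
      intro u v huv
      have := key u
      rw [huv, key v] at this
      have h2 : p • ((TensorProduct.lid R M) v - (TensorProduct.lid R M) u) = 0 := by
        rw [smul_sub, ← this, sub_self]
      have h3 := sub_eq_zero.mp (h p _ hp0 h2)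
      exact (TensorProduct.lid R M).injective h3.symm
    have hsurj : Function.Surjective (LinearMap.rTensor M e.toLinearMap) :=
      LinearMap.rTensor_surjective M e.surjective
    have hcomp : LinearMap.rTensor M c =
        (LinearMap.rTensor M (Submodule.span R {p}).subtype) ∘ₗ
          (LinearMap.rTensor M e.toLinearMap) := by
      rw [hc, LinearMap.rTensor_comp]
    intro u v huv
    obtain ⟨u', rfl⟩ := hsurj u
    obtain ⟨v', rfl⟩ := hsurj v
    have : LinearMap.rTensor M c u' = LinearMap.rTensor M c v' := by
      rw [hcomp]; exact huv
    rw [hcinj this]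

open MvPolynomial

lemma prime_xA : Prime xA := by
  rw [← MulEquiv.prime_iff (MvPolynomial.finSuccEquiv RR 1).toRingEquiv.toMulEquiv]
  show Prime ((MvPolynomial.finSuccEquiv RR 1) (X 0))
  rw [MvPolynomial.finSuccEquiv_X_zero]
  exact Polynomial.prime_X

lemma prime_yA : Prime yA := by
  rw [← MulEquiv.prime_iff
    ((MvPolynomial.renameEquiv RR (Equiv.swap (0 : Fin 2) 1)).toRingEquiv.toMulEquiv)]
  show Prime ((MvPolynomial.renameEquiv RR (Equiv.swap (0 : Fin 2) 1)) (X 1))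
  rw [MvPolynomial.renameEquiv_apply, MvPolynomial.rename_X, Equiv.swap_apply_right]
  exact prime_xA

/-- the automorphism `x ↦ x + y - z`, `y ↦ y`. -/
noncomputable def τA : AA ≃ₐ[RR] AA :=
  AlgEquiv.ofAlgHom (MvPolynomial.aeval ![xA + yA - zA, yA])
    (MvPolynomial.aeval ![xA - yA + zA, yA])
    (by
      apply MvPolynomial.algHom_ext
      intro i
      fin_cases i <;>
        simp [xA, yA, zA, MvPolynomial.algebraMap_eq] <;> ring)
    (by
      apply MvPolynomial.algHom_ext
      intro i
      fin_cases i <;>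
        simp [xA, yA, zA, MvPolynomial.algebraMap_eq] <;> ring)

lemma prime_wA : Prime (xA + yA - zA) := by
  have h : τA xA = xA + yA - zA := by
    simp [τA, xA]
  rw [← h]
  exact (MulEquiv.prime_iff τA.toRingEquiv.toMulEquiv).mpr prime_xA

lemma not_dvd_xA {r : RR} (hr : r ≠ 0) : ¬ xA ∣ MvPolynomial.C r := by
  rintro ⟨t, ht⟩
  apply hr
  have := congrArg MvPolynomial.constantCoeff ht
  simpa [xA] using this

lemma not_dvd_yA {r : RR} (hr : r ≠ 0) : ¬ yA ∣ MvPolynomial.C r := by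
  rintro ⟨t, ht⟩
  apply hr
  have := congrArg MvPolynomial.constantCoeff ht
  simpa [yA] using this

lemma not_dvd_wA {r : RR} (hr : r ≠ 0) : ¬ (xA + yA - zA) ∣ MvPolynomial.C r := by
  rintro ⟨t, ht⟩
  apply hr
  have := congrArg (MvPolynomial.aeval ![zA, (0 : AA)] : AA →ₐ[RR] AA) ht
  simp [xA, yA, zA, MvPolynomial.algebraMap_eq] at this
  exact this

lemma mem_span_of_smul {f : AA} (hf : Prime f) {r : RR} (hr : r ≠ 0) {a : AA}
    (h : r • a ∈ Ideal.span {f}) (hnd : ¬ f ∣ MvPolynomial.C r) : a ∈ Ideal.span {f} := by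
  rw [Ideal.mem_span_singleton] at h ⊢
  rw [MvPolynomial.smul_eq_C_mul] at h
  rcases hf.2.2 _ _ h with h' | h'
  · exact absurd h' hnd
  · exact h'

/-- The quotient `(Fin 3 → A) ⧸ S` is flat as an `ℝ[z]`-module, i.e. the
quasi-spline module `S` is a `Z`-family over `Z = Spec ℝ[z]`. -/

theorem stmt_6 : Module.Flat RR ((Fin 3 → AA) ⧸ SA) := by
  apply flat_of_torsionfree
  intro r m hr hm
  obtain ⟨g, rfl⟩ := Submodule.Quotient.mk_surjective SA m
  rw [← Submodule.Quotient.mk_smul, Submodule.Quotient.mk_eq_zero] at hm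
  rw [Submodule.Quotient.mk_eq_zero]
  simp only [SA, Submodule.mem_inf, Submodule.mem_comap, LinearMap.sub_apply,
    LinearMap.proj_apply, Pi.smul_apply] at hm ⊢
  obtain ⟨⟨h1, h2⟩, h3⟩ := hm
  refine ⟨⟨?_, ?_⟩, ?_⟩
  · exact mem_span_of_smul prime_xA hr (by rw [smul_sub]; exact h1) (not_dvd_xA hr)
  · exact mem_span_of_smul prime_yA hr (by rw [smul_sub]; exact h2) (not_dvd_yA hr)
  · exact mem_span_of_smul prime_wA hr (by rw [smul_sub]; exact h3) (not_dvd_wA hr)
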